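/- arXiv:2303.16836 — 3 statements merged into one kernel-verified Lean document; each statement's English description precedes it below -/
import Mathlib

section
/- Let C be a category and α, β objects of C such that Hom(α,α) and Hom(β,β) are finite. If f : α → β and g : β → α are both epimorphisms, then f and g are isomorphisms (in particular α and β are isomorphic). -/
open CategoryTheory

private theorem epi_endo_isIso {C : Type*} [Category C] {α : C} [Finite (α ⟶ α)]
    (e : α ⟶ α) (he : Epi e) : IsIso e := by
  have hinj : Function.Injective (fun u : α ⟶ α => e ≫ u) := by
    intro u v huv
    exact (cancel_epi e).mp huv
  obtain ⟨u, hu⟩ := (Finite.injective_iff_surjective.mp hinj) (𝟙 α)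
  have : IsSplitMono e := IsSplitMono.mk' ⟨u, hu⟩
  exact isIso_of_epi_of_isSplitMono e

/-- In any category, if `α` and `β` have finite endomorphism sets, and
`f : α ⟶ β` and `g : β ⟶ α` are both epimorphisms, then `f` and `g` are
isomorphisms; in particular `α ≅ β`. -/
theorem epi_pair_isIso_of_finite {C : Type*} [Category C] (α β : C)
    [Finite (α ⟶ α)] [Finite (β ⟶ β)]
    (f : α ⟶ β) (g : β ⟶ α) (hf : Epi f) (hg : Epi g) :
    IsIso f ∧ IsIso g ∧ Nonempty (α ≅ β) := by
  have hfg : IsIso (f ≫ g) := epi_endo_isIso (f ≫ g) (epi_comp f g)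
  have hgf : IsIso (g ≫ f) := epi_endo_isIso (g ≫ f) (epi_comp g f)
  have hf' : IsIso f := by
    have : IsSplitMono f := IsSplitMono.mk' ⟨g ≫ inv (f ≫ g), by rw [← Category.assoc]; exact IsIso.hom_inv_id _⟩
    exact isIso_of_epi_of_isSplitMono f
  have hg' : IsIso g := by
    have : IsSplitMono g := IsSplitMono.mk' ⟨f ≫ inv (g ≫ f), by rw [← Category.assoc]; exact IsIso.hom_inv_id _⟩
    exact isIso_of_epi_of_isSplitMono g
  exact ⟨hf', hg', ⟨asIso f⟩⟩
end

section
/- If V₁, V₂, V ∈ ext(G,D) with V₁ ⊆ V and V₂ ⊆ V, then V₁ ∩ V₂ ∈ ext(G,D). -/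
namespace Paper

variable {ι Ed : Type*}

/-- The set of edges with one endpoint in `V` and the other in `W`
(a loop at `v` belongs to it iff `v ∈ V ∩ W`). -/
def edgesBetween (ends : Ed → Sym2 ι) (V W : Set ι) : Set Ed :=
  {e | ∃ a b, ends e = s(a, b) ∧ a ∈ V ∧ b ∈ W}

/-- A set of vertices is connected if it is nonempty and the induced multigraph
on it is connected. -/
def IsConnectedOn (ends : Ed → Sym2 ι) (V : Set ι) : Prop :=
  V.Nonempty ∧ ∀ u ∈ V, ∀ w ∈ V,
    Relation.ReflTransGen (fun a b => a ∈ V ∧ b ∈ V ∧ ∃ e, ends e = s(a, b)) u w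

/-- `β^⋆(V) = ∑_{v ∈ V} (φ^⋆(v) - D(v)) + |E(V,V^c)|/2`. -/
noncomputable def beta (ends : Ed → Sym2 ι) (D : ι → ℤ) (φ : ι → ℝ) (V : Set ι) : ℝ :=
  (∑ᶠ v ∈ V, (φ v - (D v : ℝ))) + ((edgesBetween ends V Vᶜ).ncard : ℝ) / 2

/-- `β⁰ = (β⁺ + β⁻)/2`. -/
noncomputable def betaZero (ends : Ed → Sym2 ι) (D : ι → ℤ) (φp φm : ι → ℝ) (V : Set ι) : ℝ :=
  (beta ends D φp V + beta ends D φm V) / 2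

/-- A subset `∅ ⊊ V ⊊ ι` is extremal if `β⁺(V) > 0` and `β⁻(V) < 0`. -/
def Extremal (ends : Ed → Sym2 ι) (D : ι → ℤ) (φp φm : ι → ℝ) (V : Set ι) : Prop :=
  V.Nonempty ∧ V ≠ Set.univ ∧ 0 < beta ends D φp V ∧ beta ends D φm V < 0

/-- `ext(G,D)`: extremal subsets which are connected with connected complement. -/
def extSet (ends : Ed → Sym2 ι) (D : ι → ℤ) (φp φm : ι → ℝ) : Set (Set ι) :=
  {V | Extremal ends D φp φm V ∧ IsConnectedOn ends V ∧ IsConnectedOn ends Vᶜ}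

/-- `nex(V') = ⋂ {V ∈ V_• : V' ⊊ V}` (the empty intersection being everything). -/
def nex (Vb : Set (Set ι)) (V' : Set ι) : Set ι :=
  ⋂₀ {V | V ∈ Vb ∧ V' ⊂ V}

/-- A full forest in `ext(G,D)`. -/
def IsFullForest (ends : Ed → Sym2 ι) (D : ι → ℤ) (φp φm : ι → ℝ)
    (Vb : Set (Set ι)) : Prop :=
  Vb ⊆ extSet ends D φp φm ∧
  (∀ V ∈ Vb, IsChain (· ⊆ ·) {W | W ∈ Vb ∧ W ⊆ V}) ∧
  (∀ V ∈ extSet ends D φp φm,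
    (∀ W ∈ extSet ends D φp φm, V ⊆ W → V = W) → V ∈ Vb) ∧
  (∀ e : Ed, ∃ V ∈ Vb, e ∈ edgesBetween ends V Vᶜ)

/-- `L` is a lower subset of `ext`. -/
def IsLowerSubset (ext L : Set (Set ι)) : Prop :=
  L ⊆ ext ∧ ∀ V ∈ L, ∀ W ∈ ext, W ⊆ V → W ∈ L

/-- A vine function on a lower set `L ⊆ ext`. -/
def IsVineFunction (ends : Ed → Sym2 ι) (ext L : Set (Set ι))
    (α : Set ι → Set Ed) : Prop :=
  (∀ V ∈ L, α V ⊆ edgesBetween ends V Vᶜ) ∧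
  ∀ V ∈ L, (α V = ∅ ↔
    ∃ V' ∈ ext, V' ⊂ V ∧ (α V' ∩ edgesBetween ends V Vᶜ).Nonempty)

/-- A full vine function: a vine function with `L = ext` whose values cover all edges
(extended by `∅` outside `ext`). -/
def IsFullVine (ends : Ed → Sym2 ι) (ext : Set (Set ι)) (α : Set ι → Set Ed) : Prop :=
  IsVineFunction ends ext ext α ∧ (⋃ V ∈ ext, α V) = (Set.univ : Set Ed) ∧
  ∀ V ∉ ext, α V = ∅

/-- The vine function associated to a full forest:
`α_{V_•}(V) = E(V, nex(V) \ V)` for `V ∈ V_•`, and `∅` otherwise. -/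
def alphaOf (ends : Ed → Sym2 ι) (Vb : Set (Set ι)) (V : Set ι) : Set Ed :=
  {e | V ∈ Vb ∧ e ∈ edgesBetween ends V (nex Vb V \ V)}


section Aux

open Set

lemma sym2_exists_rep (z : Sym2 ι) : ∃ x y, z = s(x, y) := by
  induction z using Sym2.ind with
  | _ x y => exact ⟨x, y, rfl⟩

lemma mem_edgesBetween_iff {ends : Ed → Sym2 ι} {e : Ed} {x y : ι}
    (h : ends e = s(x, y)) (V W : Set ι) :
    e ∈ edgesBetween ends V W ↔ (x ∈ V ∧ y ∈ W) ∨ (y ∈ V ∧ x ∈ W) := by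
  constructor
  · rintro ⟨a, b, hab, ha, hb⟩
    rw [h, Sym2.eq_iff] at hab
    rcases hab with ⟨rfl, rfl⟩ | ⟨rfl, rfl⟩
    · exact Or.inl ⟨ha, hb⟩
    · exact Or.inr ⟨ha, hb⟩
  · rintro (⟨hx, hy⟩ | ⟨hy, hx⟩)
    · exact ⟨x, y, h, hx, hy⟩
    · exact ⟨y, x, by rw [h, Sym2.eq_swap], hy, hx⟩

variable [Fintype ι] [Fintype Ed]

lemma cut_submodular (ends : Ed → Sym2 ι) (A B : Set ι) :
    (edgesBetween ends (A ∩ B) (A ∩ B)ᶜ).ncard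
      + (edgesBetween ends (A ∪ B) (A ∪ B)ᶜ).ncard
    ≤ (edgesBetween ends A Aᶜ).ncard + (edgesBetween ends B Bᶜ).ncard := by
  have hsub : edgesBetween ends (A ∩ B) (A ∩ B)ᶜ ∪ edgesBetween ends (A ∪ B) (A ∪ B)ᶜ
      ⊆ edgesBetween ends A Aᶜ ∪ edgesBetween ends B Bᶜ := by
    intro e he
    obtain ⟨x, y, hxy⟩ := sym2_exists_rep (ends e)
    simp only [Set.mem_union, mem_edgesBetween_iff hxy, Set.mem_inter_iff, Set.mem_compl_iff,
      Set.mem_union] at he ⊢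
    tauto
  have hint : edgesBetween ends (A ∩ B) (A ∩ B)ᶜ ∩ edgesBetween ends (A ∪ B) (A ∪ B)ᶜ
      ⊆ edgesBetween ends A Aᶜ ∩ edgesBetween ends B Bᶜ := by
    intro e he
    obtain ⟨x, y, hxy⟩ := sym2_exists_rep (ends e)
    simp only [Set.mem_inter_iff, mem_edgesBetween_iff hxy, Set.mem_compl_iff,
      Set.mem_union, Set.mem_inter_iff] at he ⊢
    tauto
  calc (edgesBetween ends (A ∩ B) (A ∩ B)ᶜ).ncard
        + (edgesBetween ends (A ∪ B) (A ∪ B)ᶜ).ncard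
      = (edgesBetween ends (A ∩ B) (A ∩ B)ᶜ ∪ edgesBetween ends (A ∪ B) (A ∪ B)ᶜ).ncard
        + (edgesBetween ends (A ∩ B) (A ∩ B)ᶜ ∩ edgesBetween ends (A ∪ B) (A ∪ B)ᶜ).ncard :=
        (Set.ncard_union_add_ncard_inter _ _).symm
    _ ≤ (edgesBetween ends A Aᶜ ∪ edgesBetween ends B Bᶜ).ncard
        + (edgesBetween ends A Aᶜ ∩ edgesBetween ends B Bᶜ).ncard :=
        add_le_add (Set.ncard_le_ncard hsub (Set.toFinite _))
          (Set.ncard_le_ncard hint (Set.toFinite _))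
    _ = _ := Set.ncard_union_add_ncard_inter _ _

lemma beta_submodular (ends : Ed → Sym2 ι) (D : ι → ℤ) (φ : ι → ℝ) (A B : Set ι) :
    beta ends D φ (A ∩ B) + beta ends D φ (A ∪ B) ≤ beta ends D φ A + beta ends D φ B := by
  have hsum : (∑ᶠ v ∈ A ∪ B, (φ v - (D v : ℝ))) + ∑ᶠ v ∈ A ∩ B, (φ v - (D v : ℝ))
      = (∑ᶠ v ∈ A, (φ v - (D v : ℝ))) + ∑ᶠ v ∈ B, (φ v - (D v : ℝ)) :=
    finsum_mem_union_inter (Set.toFinite A) (Set.toFinite B)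
  have hcut := cut_submodular ends A B
  have hcut' : ((edgesBetween ends (A ∩ B) (A ∩ B)ᶜ).ncard : ℝ)
      + ((edgesBetween ends (A ∪ B) (A ∪ B)ᶜ).ncard : ℝ)
      ≤ ((edgesBetween ends A Aᶜ).ncard : ℝ) + ((edgesBetween ends B Bᶜ).ncard : ℝ) := by
    exact_mod_cast hcut
  unfold beta
  linarith

lemma beta_additive (ends : Ed → Sym2 ι) (D : ι → ℤ) (φ : ι → ℝ) {A B : Set ι}
    (hd : Disjoint A B) (he : edgesBetween ends A B = ∅) :
    beta ends D φ (A ∪ B) = beta ends D φ A + beta ends D φ B := by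
  have hdis : ∀ x y : ι, ¬(x ∈ A ∧ y ∈ B) ∨ True := fun _ _ => Or.inr trivial
  have hcut : edgesBetween ends (A ∪ B) (A ∪ B)ᶜ
      = edgesBetween ends A Aᶜ ∪ edgesBetween ends B Bᶜ := by
    ext e
    obtain ⟨x, y, hxy⟩ := sym2_exists_rep (ends e)
    have hAB : e ∉ edgesBetween ends A B := by rw [he]; exact Set.notMem_empty e
    rw [mem_edgesBetween_iff hxy] at hAB
    have hxA : x ∈ A → x ∉ B := fun h h' => hd.ne_of_mem h h' rfl
    have hyA : y ∈ A → y ∉ B := fun h h' => hd.ne_of_mem h h' rfl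
    simp only [Set.mem_union, mem_edgesBetween_iff hxy, Set.mem_compl_iff, Set.mem_union]
    tauto
  have hdcut : Disjoint (edgesBetween ends A Aᶜ) (edgesBetween ends B Bᶜ) := by
    rw [Set.disjoint_left]
    intro e heA heB
    obtain ⟨x, y, hxy⟩ := sym2_exists_rep (ends e)
    have hAB : e ∉ edgesBetween ends A B := by rw [he]; exact Set.notMem_empty e
    rw [mem_edgesBetween_iff hxy] at hAB heA heB
    have hxA : x ∈ A → x ∉ B := fun h h' => hd.ne_of_mem h h' rfl
    have hyA : y ∈ A → y ∉ B := fun h h' => hd.ne_of_mem h h' rfl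
    simp only [Set.mem_compl_iff] at heA heB
    tauto
  have hncard : (edgesBetween ends (A ∪ B) (A ∪ B)ᶜ).ncard
      = (edgesBetween ends A Aᶜ).ncard + (edgesBetween ends B Bᶜ).ncard := by
    rw [hcut, Set.ncard_union_eq hdcut (Set.toFinite _) (Set.toFinite _)]
  have hsum : (∑ᶠ v ∈ A ∪ B, (φ v - (D v : ℝ)))
      = (∑ᶠ v ∈ A, (φ v - (D v : ℝ))) + ∑ᶠ v ∈ B, (φ v - (D v : ℝ)) :=
    finsum_mem_union hd (Set.toFinite A) (Set.toFinite B)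
  unfold beta
  rw [hncard, hsum]
  push_cast
  ring

lemma isConnectedOn_union {ends : Ed → Sym2 ι} {A B : Set ι}
    (hA : IsConnectedOn ends A) (hB : IsConnectedOn ends B) (h : (A ∩ B).Nonempty) :
    IsConnectedOn ends (A ∪ B) := by
  obtain ⟨z, hzA, hzB⟩ := h
  have monoA : ∀ u w, Relation.ReflTransGen
      (fun a b => a ∈ A ∧ b ∈ A ∧ ∃ e, ends e = s(a, b)) u w →
      Relation.ReflTransGen (fun a b => a ∈ A ∪ B ∧ b ∈ A ∪ B ∧ ∃ e, ends e = s(a, b)) u w :=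
    fun u w h => Relation.ReflTransGen.mono (fun a b (hab : a ∈ A ∧ b ∈ A ∧ ∃ e, ends e = s(a, b)) => (⟨Or.inl hab.1, Or.inl hab.2.1, hab.2.2⟩ : a ∈ A ∪ B ∧ b ∈ A ∪ B ∧ ∃ e, ends e = s(a, b))) u w h
  have monoB : ∀ u w, Relation.ReflTransGen
      (fun a b => a ∈ B ∧ b ∈ B ∧ ∃ e, ends e = s(a, b)) u w →
      Relation.ReflTransGen (fun a b => a ∈ A ∪ B ∧ b ∈ A ∪ B ∧ ∃ e, ends e = s(a, b)) u w :=
    fun u w h => Relation.ReflTransGen.mono (fun a b (hab : a ∈ B ∧ b ∈ B ∧ ∃ e, ends e = s(a, b)) => (⟨Or.inr hab.1, Or.inr hab.2.1, hab.2.2⟩ : a ∈ A ∪ B ∧ b ∈ A ∪ B ∧ ∃ e, ends e = s(a, b))) u w h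
  refine ⟨⟨z, Or.inl hzA⟩, ?_⟩
  have key : ∀ u ∈ A ∪ B, Relation.ReflTransGen
      (fun a b => a ∈ A ∪ B ∧ b ∈ A ∪ B ∧ ∃ e, ends e = s(a, b)) u z := by
    rintro u (hu | hu)
    · exact monoA _ _ (hA.2 u hu z hzA)
    · exact monoB _ _ (hB.2 u hu z hzB)
  intro u hu w hw
  have hsymm : Symmetric (fun a b => a ∈ A ∪ B ∧ b ∈ A ∪ B ∧ ∃ e, ends e = s(a, b)) := by
    rintro a b ⟨h1, h2, e, he⟩
    exact ⟨h2, h1, e, by rw [he, Sym2.eq_swap]⟩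
  exact (key u hu).trans ((@Relation.ReflTransGen.symmetric _ _ ⟨fun a b h => hsymm h⟩).symm _ _ (key w hw))

end Aux

/-- Corollary: if `V₁, V₂ ∈ ext(G,D)` are both contained in some
`V ∈ ext(G,D)`, then `V₁ ∩ V₂ ∈ ext(G,D)`. -/
theorem inter_mem_ext {ι Ed : Type*} [Fintype ι] [Fintype Ed]
    (ends : Ed → Sym2 ι) (D : ι → ℤ) (φp φm : ι → ℝ)
    (hconn : IsConnectedOn ends (Set.univ : Set ι))
    (hA : ∀ V : Set ι, V.Nonempty → V ≠ Set.univ → 0 < beta ends D φp V)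
    (hB : ∀ V : Set ι, 0 ≤ betaZero ends D φp φm V)
    (hC : ∀ V : Set ι, beta ends D φm V < 0 → betaZero ends D φp φm V = 0)
    (v₁ : ι) (hstar : ∀ V : Set ι, Extremal ends D φp φm V → v₁ ∈ V)
    (V₁ V₂ V : Set ι)
    (h₁ : V₁ ∈ extSet ends D φp φm) (h₂ : V₂ ∈ extSet ends D φp φm)
    (hV : V ∈ extSet ends D φp φm) (hs₁ : V₁ ⊆ V) (hs₂ : V₂ ⊆ V) :
    V₁ ∩ V₂ ∈ extSet ends D φp φm := by
  classical
  set I := V₁ ∩ V₂ with hI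
  obtain ⟨hex₁, hc₁, hcc₁⟩ := h₁
  obtain ⟨hex₂, hc₂, hcc₂⟩ := h₂
  obtain ⟨hexV, hcV, hccV⟩ := hV
  -- basic facts
  have hv₁I : v₁ ∈ I := ⟨hstar V₁ hex₁, hstar V₂ hex₂⟩
  have hIne : I.Nonempty := ⟨v₁, hv₁I⟩
  have hInu : I ≠ Set.univ := by
    intro h
    exact hex₁.2.1 (Set.eq_univ_of_univ_subset (h ▸ Set.inter_subset_left : Set.univ ⊆ V₁))
  -- betaZero of V₁ and V₂ vanish
  have hz₁ : betaZero ends D φp φm V₁ = 0 := hC V₁ hex₁.2.2.2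
  have hz₂ : betaZero ends D φp φm V₂ = 0 := hC V₂ hex₂.2.2.2
  -- betaZero submodularity forces betaZero I = 0
  have hsubp := beta_submodular ends D φp V₁ V₂
  have hsubm := beta_submodular ends D φm V₁ V₂
  have hI0 : betaZero ends D φp φm I = 0 := by
    have h1 := hB I
    have h2 := hB (V₁ ∪ V₂)
    unfold betaZero at *
    rw [hI]
    linarith
  -- any nonempty proper subset with vanishing betaZero is extremal
  have hextrOf : ∀ W : Set ι, W.Nonempty → W ≠ Set.univ →
      betaZero ends D φp φm W = 0 → Extremal ends D φp φm W := by
    intro W hne hnu h0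
    have hp := hA W hne hnu
    refine ⟨hne, hnu, hp, ?_⟩
    unfold betaZero at h0
    linarith
  have hExtI : Extremal ends D φp φm I := hextrOf I hIne hInu hI0
  -- connectivity of I
  have hconnI : IsConnectedOn ends I := by
    refine ⟨hIne, ?_⟩
    set R := fun a b => a ∈ I ∧ b ∈ I ∧ ∃ e, ends e = s(a, b) with hR
    have key : ∀ u ∈ I, ∀ w ∈ I, Relation.ReflTransGen R u w := by
      intro u hu w hw
      set C := {x | x ∈ I ∧ Relation.ReflTransGen R u x} with hCdef
      have hCI : C ⊆ I := fun x hx => hx.1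
      have huC : u ∈ C := ⟨hu, Relation.ReflTransGen.refl⟩
      by_contra hncw
      have hwD : w ∈ I \ C := ⟨hw, fun h => hncw h.2⟩
      set Dd := I \ C with hDdef
      have hdisj' : Disjoint C Dd := by
        rw [Set.disjoint_left]; intro x hx hx'; exact hx'.2 hx
      have hedge : edgesBetween ends C Dd = ∅ := by
        ext e
        simp only [Set.mem_empty_iff_false, iff_false]
        rintro ⟨a, b, hab, haC, hbD⟩
        exact hbD.2 ⟨hbD.1, haC.2.tail ⟨hCI haC, hbD.1, e, hab⟩⟩
      have hunion : C ∪ Dd = I := by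
        apply Set.eq_of_subset_of_subset
        · rintro x (hx | hx); exacts [hCI hx, hx.1]
        · intro x hx
          by_cases h : x ∈ C
          · exact Or.inl h
          · exact Or.inr ⟨hx, h⟩
      have haddp := beta_additive ends D φp hdisj' hedge
      have haddm := beta_additive ends D φm hdisj' hedge
      rw [hunion] at haddp haddm
      have hC0 : betaZero ends D φp φm C = 0 := by
        have h1 := hB C
        have h2 := hB Dd
        unfold betaZero at *
        linarith
      have hD0 : betaZero ends D φp φm Dd = 0 := by
        have h1 := hB C
        have h2 := hB Dd
        unfold betaZero at *
        linarith
      have hCnu : C ≠ Set.univ := by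
        intro h
        exact hInu (Set.eq_univ_of_univ_subset (h ▸ hCI))
      have hDnu : Dd ≠ Set.univ := by
        intro h
        refine hInu (Set.eq_univ_of_univ_subset ?_)
        rw [← h]; exact Set.diff_subset
      have hCE := hextrOf C ⟨u, huC⟩ hCnu hC0
      have hDE := hextrOf Dd ⟨w, hwD⟩ hDnu hD0
      have h1 := hstar C hCE
      have h2 := hstar Dd hDE
      exact h2.2 h1
    exact key
  -- connectivity of Iᶜ
  have hcompl : Iᶜ = V₁ᶜ ∪ V₂ᶜ := by
    rw [hI, Set.compl_inter]
  have hconnIc : IsConnectedOn ends Iᶜ := by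
    rw [hcompl]
    apply isConnectedOn_union hcc₁ hcc₂
    obtain ⟨z, hz⟩ := hccV.1
    exact ⟨z, fun h => hz (hs₁ h), fun h => hz (hs₂ h)⟩
  exact ⟨hExtI, hconnI, hconnIc⟩


end Paper
end

section
/- Let S ⊆ P be a chain. Then the sum, over all nonempty chains ℓ ⊆ P with S ⊆ ℓ, of (−1)^{|S|+|ℓ|}·x(max ℓ), equals: (i) −∑_{V minimal in P} x(V), if S = ∅; (ii) 0, if there exists V ∈ P \ S with V < max(S) such that S ∪ {V} is a chain; (iii) x(max S) − ∑_{V covering max S in P} x(V), otherwise (S nonempty). -/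
open Finset in
lemma aux_pm1 {R : Type*} [CommRing R] {α : Type*} [DecidableEq α] (D : Finset α) :
    (∑ m ∈ D.powerset, (-1 : R) ^ m.card) = if D = ∅ then 1 else 0 := by
  have h := Finset.sum_powerset_neg_one_pow_card (x := D)
  have : ((∑ m ∈ D.powerset, (-1 : ℤ) ^ m.card : ℤ) : R)
      = ∑ m ∈ D.powerset, (-1 : R) ^ m.card := by push_cast; ring_nf
  rw [← this, h]
  split <;> simp

open Finset in
lemma aux_sum {R : Type*} [CommRing R] {α : Type*} [DecidableEq α] (A D : Finset α) :
    (∑ ℓ ∈ D.powerset.filter (fun ℓ => A ⊆ ℓ), (-1 : R) ^ ℓ.card)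
      = if A = D then (-1) ^ A.card else 0 := by
  by_cases hAD : A ⊆ D
  · have key : (∑ ℓ ∈ D.powerset.filter (fun ℓ => A ⊆ ℓ), (-1 : R) ^ ℓ.card)
        = ∑ t ∈ (D \ A).powerset, (-1 : R) ^ (t ∪ A).card := by
      refine Finset.sum_nbij' (fun ℓ => ℓ \ A) (fun t => t ∪ A) ?_ ?_ ?_ ?_ ?_
      · intro ℓ hℓ
        simp only [mem_filter, mem_powerset] at hℓ ⊢
        exact sdiff_subset_sdiff hℓ.1 (le_refl _)
      · intro t ht
        simp only [mem_filter, mem_powerset] at ht ⊢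
        constructor
        · exact union_subset (ht.trans (sdiff_subset)) hAD
        · exact subset_union_right
      · intro ℓ hℓ
        simp only [mem_filter, mem_powerset] at hℓ
        exact sdiff_union_of_subset hℓ.2
      · intro t ht
        simp only [mem_powerset] at ht
        have hdisj : Disjoint t A := Disjoint.mono_left ht sdiff_disjoint
        show (t ∪ A) \ A = t
        rw [union_sdiff_right, sdiff_eq_self_of_disjoint hdisj]
      · intro ℓ hℓ
        simp only [mem_filter, mem_powerset] at hℓ
        rw [sdiff_union_of_subset hℓ.2]
    rw [key]
    have hc : ∀ t ∈ (D \ A).powerset, ((t ∪ A).card : ℕ) = t.card + A.card := by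
      intro t ht
      simp only [mem_powerset] at ht
      exact card_union_of_disjoint (Disjoint.mono_left ht sdiff_disjoint)
    calc (∑ t ∈ (D \ A).powerset, (-1 : R) ^ (t ∪ A).card)
        = ∑ t ∈ (D \ A).powerset, (-1 : R) ^ t.card * (-1) ^ A.card := by
          refine Finset.sum_congr rfl fun t ht => ?_
          rw [hc t ht, pow_add]
      _ = (∑ t ∈ (D \ A).powerset, (-1 : R) ^ t.card) * (-1) ^ A.card := by
          rw [Finset.sum_mul]
      _ = (if A = D then (-1 : R) ^ A.card else 0) := by
          rw [aux_pm1]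
          have : (D \ A = ∅) ↔ A = D := by
            rw [Finset.sdiff_eq_empty_iff_subset]
            exact ⟨fun h => le_antisymm hAD h, fun h => h ▸ le_refl _⟩
          split_ifs with h1 h2 h2
          · ring
          · exact absurd (this.mp h1) h2
          · exact absurd (this.mpr h2) h1
          · ring
  · have h1 : D.powerset.filter (fun ℓ => A ⊆ ℓ) = ∅ := by
      refine Finset.filter_eq_empty_iff.mpr ?_
      intro ℓ hℓ hAl
      exact hAD (hAl.trans (mem_powerset.mp hℓ))
    rw [h1]
    have : ¬ A = D := fun h => hAD (h ▸ le_refl _)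
    simp [this]


open Finset in
lemma T_eval {P : Type*} [Fintype P] [PartialOrder P] {R : Type*} [CommRing R]
    [DecidableEq P] [DecidableRel ((· ≤ ·) : P → P → Prop)]
    (hforest : ∀ a : P, IsChain (· ≤ ·) {b : P | b ≤ a})
    (aux_sum : ∀ (A D : Finset P),
      (∑ ℓ ∈ D.powerset.filter (fun ℓ => A ⊆ ℓ), (-1 : R) ^ ℓ.card)
        = if A = D then (-1) ^ A.card else 0)
    (x : P → R) (S : Finset P) :
    (∑ᶠ p ∈ {p : Finset P × P | IsChain (· ≤ ·) ((p.1 : Set P)) ∧ S ⊆ p.1 ∧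
        p.2 ∈ p.1 ∧ ∀ b ∈ p.1, b ≤ p.2},
      ((-1 : R) ^ (S.card + p.1.card) * x p.2)) =
    ∑ m : P, (if insert m S = Finset.univ.filter (· ≤ m)
      then (-1 : R) ^ (S.card + (insert m S).card) * x m else 0) := by
  classical
  have hset : {p : Finset P × P | IsChain (· ≤ ·) ((p.1 : Set P)) ∧ S ⊆ p.1 ∧
      p.2 ∈ p.1 ∧ ∀ b ∈ p.1, b ≤ p.2}
      = ↑(Finset.univ.filter (fun p : Finset P × P =>
        IsChain (· ≤ ·) ((p.1 : Set P)) ∧ S ⊆ p.1 ∧ p.2 ∈ p.1 ∧ ∀ b ∈ p.1, b ≤ p.2)) := by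
    ext p; simp
  rw [hset, finsum_mem_coe_finset, Finset.sum_filter, Fintype.sum_prod_type, Finset.sum_comm]
  refine Finset.sum_congr rfl fun m _ => ?_
  have hcond : ∀ ℓ : Finset P,
      (IsChain (· ≤ ·) ((ℓ : Set P)) ∧ S ⊆ ℓ ∧ m ∈ ℓ ∧ ∀ b ∈ ℓ, b ≤ m)
      ↔ (ℓ ⊆ Finset.univ.filter (· ≤ m) ∧ insert m S ⊆ ℓ) := by
    intro ℓ
    constructor
    · rintro ⟨-, h2, h3, h4⟩
      exact ⟨fun b hb => by simp [h4 b hb], Finset.insert_subset h3 h2⟩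
    · rintro ⟨h1, h2⟩
      have hle : ∀ b ∈ ℓ, b ≤ m := fun b hb => by simpa using h1 hb
      exact ⟨(hforest m).mono (fun b hb => hle b hb), (Finset.insert_subset_iff.mp h2).2,
        h2 (Finset.mem_insert_self m S), hle⟩
  have key : (∑ ℓ : Finset P,
      if (IsChain (· ≤ ·) ((ℓ : Set P)) ∧ S ⊆ ℓ ∧ m ∈ ℓ ∧ ∀ b ∈ ℓ, b ≤ m)
        then (-1 : R) ^ (S.card + ℓ.card) * x m else 0)
      = (if insert m S = Finset.univ.filter (· ≤ m)
        then (-1 : R) ^ (S.card + (insert m S).card) * x m else 0) := by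
    have e1 : (∑ ℓ : Finset P,
        if (IsChain (· ≤ ·) ((ℓ : Set P)) ∧ S ⊆ ℓ ∧ m ∈ ℓ ∧ ∀ b ∈ ℓ, b ≤ m)
          then (-1 : R) ^ (S.card + ℓ.card) * x m else 0)
        = ∑ ℓ ∈ (Finset.univ.filter (· ≤ m)).powerset.filter (fun ℓ => insert m S ⊆ ℓ),
            (-1 : R) ^ (S.card + ℓ.card) * x m := by
      rw [← Finset.sum_filter]
      refine Finset.sum_congr ?_ fun ℓ _ => rfl
      ext ℓ
      simp only [Finset.mem_filter, Finset.mem_powerset, Finset.mem_univ, true_and]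
      exact hcond ℓ
    have e2 : (∑ ℓ ∈ (Finset.univ.filter (· ≤ m)).powerset.filter (fun ℓ => insert m S ⊆ ℓ),
          (-1 : R) ^ (S.card + ℓ.card) * x m)
        = ((-1 : R) ^ S.card * x m) *
          ∑ ℓ ∈ (Finset.univ.filter (· ≤ m)).powerset.filter (fun ℓ => insert m S ⊆ ℓ),
            (-1 : R) ^ ℓ.card := by
      rw [Finset.mul_sum]
      refine Finset.sum_congr rfl fun ℓ _ => ?_
      rw [pow_add]; ring
    rw [e1, e2, aux_sum]
    split_ifs with h
    · rw [pow_add]; ring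
    · ring
  refine Eq.trans (Finset.sum_congr rfl fun ℓ _ => ?_) key
  split_ifs with h1 <;> rfl

/-- Lemma (sum over chains in a forest poset). Let `P` be a finite poset which
is a forest (every lower set `{b : b ≤ a}` is a chain), `R` a commutative ring,
`x : P → R`, and `S ⊆ P` a chain. The sum over all nonempty chains `ℓ` with
`S ⊆ ℓ` of `(−1)^{|S|+|ℓ|}·x(max ℓ)` (encoded as a sum over pairs `(ℓ, m)`
with `m` the top element of the chain `ℓ`) equals:
`−∑_{V minimal} x(V)` if `S = ∅`; `0` if some `V ∉ S` with `V < max S` keeps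
`S ∪ {V}` a chain; and `x(max S) − ∑_{V ⋗ max S} x(V)` otherwise. -/
theorem sum_over_chains_in_forest {P : Type*} [Fintype P] [PartialOrder P]
    {R : Type*} [CommRing R]
    (hforest : ∀ a : P, IsChain (· ≤ ·) {b : P | b ≤ a})
    (x : P → R) (S : Finset P) (hS : IsChain (· ≤ ·) (S : Set P)) :
    (S = ∅ →
      (∑ᶠ p ∈ {p : Finset P × P | IsChain (· ≤ ·) ((p.1 : Set P)) ∧ S ⊆ p.1 ∧
          p.2 ∈ p.1 ∧ ∀ b ∈ p.1, b ≤ p.2},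
        ((-1 : R) ^ (S.card + p.1.card) * x p.2)) =
      -(∑ᶠ v ∈ {v : P | IsMin v}, x v)) ∧
    (∀ m ∈ S, (∀ b ∈ S, b ≤ m) →
      ((∃ V : P, V ∉ S ∧ V < m ∧ IsChain (· ≤ ·) (insert V (S : Set P))) →
        (∑ᶠ p ∈ {p : Finset P × P | IsChain (· ≤ ·) ((p.1 : Set P)) ∧ S ⊆ p.1 ∧
            p.2 ∈ p.1 ∧ ∀ b ∈ p.1, b ≤ p.2},
          ((-1 : R) ^ (S.card + p.1.card) * x p.2)) = 0) ∧
      ((¬ ∃ V : P, V ∉ S ∧ V < m ∧ IsChain (· ≤ ·) (insert V (S : Set P))) →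
        (∑ᶠ p ∈ {p : Finset P × P | IsChain (· ≤ ·) ((p.1 : Set P)) ∧ S ⊆ p.1 ∧
            p.2 ∈ p.1 ∧ ∀ b ∈ p.1, b ≤ p.2},
          ((-1 : R) ^ (S.card + p.1.card) * x p.2)) =
        x m - ∑ᶠ V ∈ {V : P | m ⋖ V}, x V)) := by
  classical
  have hT := T_eval hforest (fun A D => aux_sum A D) x S
  have hDm : ∀ a b : P, b ∈ Finset.univ.filter (· ≤ a) ↔ b ≤ a := by
    intro a b; simp
  constructor
  · -- S = ∅
    intro hSe
    subst hSe
    rw [hT]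
    have hmin : {v : P | IsMin v} = ↑(Finset.univ.filter (fun v : P => IsMin v)) := by
      ext v; simp
    rw [hmin, finsum_mem_coe_finset, Finset.sum_filter, ← Finset.sum_neg_distrib]
    refine Finset.sum_congr rfl fun a _ => ?_
    have hcond : (insert a (∅ : Finset P) = Finset.univ.filter (· ≤ a)) ↔ IsMin a := by
      constructor
      · intro h
        intro b hb
        have : b ∈ insert a (∅ : Finset P) := by rw [h, hDm]; exact hb
        simp only [Finset.mem_insert, Finset.notMem_empty, or_false] at this
        exact this ▸ le_refl b
      · intro h
        ext b
        simp only [Finset.mem_insert, Finset.notMem_empty, or_false, hDm]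
        constructor
        · rintro rfl; exact le_refl b
        · intro hb; exact le_antisymm hb (h hb)
    by_cases h : IsMin a
    · rw [if_pos (hcond.mpr h), if_pos h]
      simp
    · rw [if_neg (fun hc => h (hcond.mp hc)), if_neg h]
      simp
  · intro m hm hmax
    constructor
    · -- case (ii)
      rintro ⟨V, hVS, hVm, -⟩
      rw [hT]
      refine Finset.sum_eq_zero fun a _ => ?_
      rw [if_neg]
      intro h
      by_cases haS : a ∈ S
      · rw [Finset.insert_eq_self.mpr haS] at h
        have ham : a = m := le_antisymm (hmax a haS)
          (by rw [← hDm a m]; rw [← h]; exact hm)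
        subst ham
        exact hVS (by rw [h, hDm]; exact le_of_lt hVm)
      · have hma : m < a := by
          have : m ≤ a := by rw [← hDm a m, ← h]; exact Finset.mem_insert_of_mem hm
          exact lt_of_le_of_ne this (fun he => haS (he ▸ hm))
        have hVa : V ∈ insert a S := by
          rw [h, hDm]; exact le_of_lt (lt_trans hVm hma)
        have hVna : V ≠ a := ne_of_lt (lt_trans hVm hma)
        exact hVS ((Finset.mem_insert.mp hVa).resolve_left hVna)
    · -- case (iii)
      intro hnex
      rw [hT]
      have hDS : Finset.univ.filter (· ≤ m) = S := by
        ext b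
        rw [hDm]
        constructor
        · intro hb
          by_contra hbS
          refine hnex ⟨b, hbS, lt_of_le_of_ne hb (fun he => hbS (he ▸ hm)), ?_⟩
          refine (hforest m).mono ?_
          intro c hc
          rcases hc with rfl | hc
          · exact hb
          · exact hmax c hc
        · intro hb; exact hmax b hb
      have hiff : ∀ a : P, (insert a S = Finset.univ.filter (· ≤ a)) ↔ (a = m ∨ m ⋖ a) := by
        intro a
        constructor
        · intro h
          by_cases haS : a ∈ S
          · left
            rw [Finset.insert_eq_self.mpr haS] at h
            exact le_antisymm (hmax a haS) (by rw [← hDm a m, ← h]; exact hm)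
          · right
            have hma : m < a := by
              have : m ≤ a := by rw [← hDm a m, ← h]; exact Finset.mem_insert_of_mem hm
              exact lt_of_le_of_ne this (fun he => haS (he ▸ hm))
            refine ⟨hma, fun c hc hca => ?_⟩
            have : c ∈ insert a S := by rw [h, hDm]; exact le_of_lt hca
            rcases Finset.mem_insert.mp this with rfl | hcS
            · exact lt_irrefl c hca
            · exact absurd (hmax c hcS) (not_le_of_gt hc)
        · rintro (rfl | hcov)
          · rw [Finset.insert_eq_self.mpr hm, hDS]
          · ext b
            rw [hDm]
            constructor
            · intro hb0
              rcases Finset.mem_insert.mp hb0 with rfl | hb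
              · exact le_refl b
              · exact le_of_lt (lt_of_le_of_lt (hmax b hb) hcov.1)
            · intro hb
              rcases eq_or_lt_of_le hb with rfl | hba
              · exact Finset.mem_insert_self b S
              · refine Finset.mem_insert_of_mem ?_
                have hcomp : b ≤ m ∨ m ≤ b := by
                  by_cases hbm : b = m
                  · exact Or.inl (hbm ▸ le_refl b)
                  · rcases (hforest a) (Set.mem_setOf.mpr hb)
                      (Set.mem_setOf.mpr (le_of_lt hcov.1)) hbm with h | h
                    · exact Or.inl h
                    · exact Or.inr h
                rcases hcomp with h | h
                · rw [← hDS, hDm]; exact h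
                · rcases eq_or_lt_of_le h with rfl | hmb
                  · exact hm
                  · exact absurd hba (hcov.2 hmb)
      -- now evaluate the sum
      have hcovfin : {V : P | m ⋖ V} = ↑(Finset.univ.filter (fun V : P => m ⋖ V)) := by
        ext v; simp
      rw [hcovfin, finsum_mem_coe_finset]
      have hterm : ∀ a : P,
          (if insert a S = Finset.univ.filter (· ≤ a)
            then (-1 : R) ^ (S.card + (insert a S).card) * x a else 0)
          = (if a = m then x m else 0) + (if m ⋖ a then -x a else 0) := by
        intro a
        by_cases h1 : a = m
        · subst h1
          rw [if_pos ((hiff a).mpr (Or.inl rfl)), if_pos rfl,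
            if_neg (fun hc => lt_irrefl a hc.1), add_zero,
            Finset.insert_eq_self.mpr hm, pow_add, ← mul_pow]
          norm_num
        · by_cases h2 : m ⋖ a
          · have haS : a ∉ S := fun haS => absurd (lt_of_le_of_lt (hmax a haS) h2.1)
              (lt_irrefl a)
            have hsq : ((-1 : R) ^ S.card) * ((-1 : R) ^ S.card) = 1 := by
              rw [← mul_pow]; norm_num
            rw [if_pos ((hiff a).mpr (Or.inr h2)), if_neg h1, if_pos h2, zero_add,
              Finset.card_insert_of_notMem haS, pow_add, pow_succ, ← mul_assoc, hsq]
            ring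
          · rw [if_neg, if_neg h1, if_neg h2, add_zero]
            intro hc
            rcases (hiff a).mp hc with h | h
            · exact h1 h
            · exact h2 h
      rw [Finset.sum_congr rfl (fun a _ => hterm a), Finset.sum_add_distrib,
        Finset.sum_ite_eq' Finset.univ m (fun _ => x m), if_pos (Finset.mem_univ m),
        ← Finset.sum_filter, Finset.sum_neg_distrib]
      ring
end
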